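/- Let a be a rational number. In the field of rational functions ℚ(u), set z = u/(1 + (a+2)u + u²) and for each integer p ≥ 0 define R_p = ((1 − u²)/u) · u^{2^p} / (1 − u^{2^{p+1}}). Then R_0 = 1, and for every p ≥ 1 one has R_p = z R_{p−1}² + 2z R_p · (Σ_{0 ≤ j < p} R_j) + a z R_p. -/

import Mathlib

noncomputable section

lemma one_sub_X_pow_ne_zero (n : ℕ) (hn : 1 ≤ n) :
    (1 : RatFunc ℚ) - RatFunc.X ^ n ≠ 0 := by
  have h : ((1 : Polynomial ℚ) - Polynomial.X ^ n) ≠ 0 := by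
    intro h
    have := congrArg (fun p => Polynomial.coeff p n) h
    simp [Polynomial.coeff_one, Nat.one_le_iff_ne_zero.mp hn] at this
  intro h0
  apply h
  apply IsFractionRing.injective (Polynomial ℚ) (RatFunc ℚ)
  rw [map_zero, map_sub, map_one, map_pow, RatFunc.algebraMap_X]
  exact h0

lemma denom_ne_zero (a : ℚ) :
    (1 + RatFunc.C (a + 2) * RatFunc.X + RatFunc.X ^ 2 : RatFunc ℚ) ≠ 0 := by
  have h : ((1 : Polynomial ℚ) + Polynomial.C (a + 2) * Polynomial.X + Polynomial.X ^ 2) ≠ 0 := by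
    intro h
    have := congrArg (fun p => Polynomial.coeff p 2) h
    simp [Polynomial.coeff_one, Polynomial.coeff_X] at this
  intro h0
  apply h
  apply IsFractionRing.injective (Polynomial ℚ) (RatFunc ℚ)
  rw [map_zero, map_add, map_add, map_one, map_mul, map_pow, RatFunc.algebraMap_X,
    RatFunc.algebraMap_C]
  exact h0

lemma key_identity {K : Type*} [Field K] (u y A : K) (hu : u ≠ 0)
    (h1 : 1 - u ≠ 0) (hy2 : 1 - y ^ 2 ≠ 0) (hy4 : 1 - y ^ 4 ≠ 0)
    (hD : 1 + (A + 2) * u + u ^ 2 ≠ 0) :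
    (1 - u ^ 2) / u * (y ^ 2 / (1 - y ^ 4)) =
      u / (1 + (A + 2) * u + u ^ 2) * ((1 - u ^ 2) / u * (y / (1 - y ^ 2))) ^ 2 +
        2 * (u / (1 + (A + 2) * u + u ^ 2)) * ((1 - u ^ 2) / u * (y ^ 2 / (1 - y ^ 4))) *
          ((1 - u ^ 2) / u * (1 / (1 - u) - 1 / (1 - y ^ 2))) +
        A * (u / (1 + (A + 2) * u + u ^ 2)) * ((1 - u ^ 2) / u * (y ^ 2 / (1 - y ^ 4))) := by
  set D : K := 1 + (A + 2) * u + u ^ 2 with hDdef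
  set M : K := u ^ 2 * (1 - u) * (1 - y ^ 2) ^ 2 * (1 - y ^ 4) * D with hMdef
  have hM : M ≠ 0 := by
    apply mul_ne_zero (mul_ne_zero (mul_ne_zero (mul_ne_zero (pow_ne_zero 2 hu) h1)
      (pow_ne_zero 2 hy2)) hy4) hD
  have hL : (1 - u ^ 2) / u * (y ^ 2 / (1 - y ^ 4)) =
      ((1 - u ^ 2) * y ^ 2 * u * (1 - u) * (1 - y ^ 2) ^ 2 * D) / M := by
    rw [hMdef]
    field_simp
  have hT1 : u / D * ((1 - u ^ 2) / u * (y / (1 - y ^ 2))) ^ 2 =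
      ((1 - u ^ 2) ^ 2 * y ^ 2 * u * (1 - u) * (1 - y ^ 4)) / M := by
    rw [hMdef]
    field_simp
  have hT2 : 2 * (u / D) * ((1 - u ^ 2) / u * (y ^ 2 / (1 - y ^ 4))) *
        ((1 - u ^ 2) / u * (1 / (1 - u) - 1 / (1 - y ^ 2))) =
      (2 * (1 - u ^ 2) ^ 2 * y ^ 2 * (u - y ^ 2) * u * (1 - y ^ 2)) / M := by
    rw [hMdef]
    field_simp
    ring
  have hT3 : A * (u / D) * ((1 - u ^ 2) / u * (y ^ 2 / (1 - y ^ 4))) =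
      (A * (1 - u ^ 2) * y ^ 2 * u ^ 2 * (1 - u) * (1 - y ^ 2) ^ 2) / M := by
    rw [hMdef]
    field_simp
  rw [hT1, hT2, hT3, hL, ← add_div, ← add_div]
  congr 1
  ring

/-- with the substitution `z = u/(1 + (a+2)u + u²)` in `ℚ(u)`, the
rational functions `R_p = ((1-u²)/u) · u^{2^p}/(1 - u^{2^{p+1}})` satisfy `R_0 = 1`
and the Horton–Strahler recursion
`R_p = z R_{p-1}² + 2z R_p (Σ_{0 ≤ j < p} R_j) + a z R_p` for `p ≥ 1`. -/
theorem weighted_unary_binary_register_recursion (a : ℚ)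
    (z : RatFunc ℚ)
    (hz : z = RatFunc.X / (1 + RatFunc.C (a + 2) * RatFunc.X + RatFunc.X ^ 2))
    (R : ℕ → RatFunc ℚ)
    (hR : ∀ p, R p = ((1 - RatFunc.X ^ 2) / RatFunc.X) *
        ((RatFunc.X : RatFunc ℚ) ^ (2 ^ p) / (1 - RatFunc.X ^ (2 ^ (p + 1))))) :
    R 0 = 1 ∧
    ∀ p, 1 ≤ p →
      R p = z * R (p - 1) ^ 2 + 2 * z * R p * (∑ j ∈ Finset.range p, R j)
              + RatFunc.C a * z * R p := by
  have hX : (RatFunc.X : RatFunc ℚ) ≠ 0 := RatFunc.X_ne_zero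
  have h1 : (1 : RatFunc ℚ) - RatFunc.X ≠ 0 := by
    have := one_sub_X_pow_ne_zero 1 le_rfl; simpa using this
  have h2 : (1 : RatFunc ℚ) - RatFunc.X ^ 2 ≠ 0 := one_sub_X_pow_ne_zero 2 (by norm_num)
  -- sum formula
  have hsum : ∀ p, (∑ j ∈ Finset.range p, R j) =
      ((1 - RatFunc.X ^ 2) / RatFunc.X) *
        (1 / (1 - RatFunc.X) - 1 / (1 - RatFunc.X ^ (2 ^ p))) := by
    intro p
    induction p with
    | zero => simp
    | succ q ih =>
      rw [Finset.sum_range_succ, ih, hR q]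
      have hy0 : (1 : RatFunc ℚ) - RatFunc.X ^ 2 ^ q ≠ 0 :=
        one_sub_X_pow_ne_zero _ Nat.one_le_two_pow
      have hy1 : (1 : RatFunc ℚ) - RatFunc.X ^ 2 ^ (q + 1) ≠ 0 :=
        one_sub_X_pow_ne_zero _ Nat.one_le_two_pow
      have e1 : (2 : ℕ) ^ (q + 1) = 2 ^ q * 2 := by ring
      rw [e1, pow_mul] at hy1 ⊢
      generalize (RatFunc.X : RatFunc ℚ) ^ 2 ^ q = y at hy0 hy1 ⊢
      field_simp
      ring
  refine ⟨?_, ?_⟩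
  · rw [hR 0]
    norm_num [pow_one]
    field_simp
  · intro p hp
    obtain ⟨q, rfl⟩ : ∃ q, p = q + 1 := ⟨p - 1, (Nat.succ_pred_eq_of_pos hp).symm⟩
    rw [hsum, hR (q + 1)]
    simp only [Nat.add_sub_cancel]
    rw [hR q, hz]
    have hC : RatFunc.C (a + 2) = RatFunc.C a + 2 := by
      rw [map_add]; norm_num
    rw [hC]
    have hD : (1 : RatFunc ℚ) + (RatFunc.C a + 2) * RatFunc.X + RatFunc.X ^ 2 ≠ 0 := by
      have := denom_ne_zero a
      rwa [hC] at this
    have hy2 : (1 : RatFunc ℚ) - RatFunc.X ^ 2 ^ (q + 1) ≠ 0 :=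
      one_sub_X_pow_ne_zero _ Nat.one_le_two_pow
    have hy4 : (1 : RatFunc ℚ) - RatFunc.X ^ 2 ^ (q + 1 + 1) ≠ 0 :=
      one_sub_X_pow_ne_zero _ Nat.one_le_two_pow
    have e1 : (2 : ℕ) ^ (q + 1) = 2 ^ q * 2 := by ring
    have e2 : (2 : ℕ) ^ (q + 1 + 1) = 2 ^ q * 4 := by ring
    rw [e1, pow_mul] at hy2 ⊢
    rw [e2, pow_mul] at hy4 ⊢
    exact key_identity RatFunc.X (RatFunc.X ^ 2 ^ q) (RatFunc.C a) hX h1 hy2 hy4 hD
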